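/- Let r₀ > 0 and let u : (0, r₀] → ℝ be differentiable with ∫₀^{r₀} u'(r)² r dr < ∞ and ∫₀^{r₀} u(r)²/r dr < ∞. Then liminf_{r→0⁺} r·|u(r)|·|u'(r)| = 0. -/

import Mathlib

open MeasureTheory Filter Set

/-- If `∫₀^{r₀} u'² r dr < ∞` and `∫₀^{r₀} u²/r dr < ∞`, then the boundary flux
`r·|u|·|u'|` has liminf zero as `r → 0⁺`. -/
theorem boundary_flux_liminf_zero
    (r₀ : ℝ) (hr₀ : 0 < r₀)
    (u u' : ℝ → ℝ)
    (hu' : ∀ r ∈ Set.Ioc (0 : ℝ) r₀, HasDerivAt u (u' r) r)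
    (hint1 : IntegrableOn (fun r => (u' r) ^ 2 * r) (Set.Ioc (0 : ℝ) r₀))
    (hint2 : IntegrableOn (fun r => (u r) ^ 2 / r) (Set.Ioc (0 : ℝ) r₀)) :
    Filter.liminf (fun r => r * |u r| * |u' r|)
      (nhdsWithin 0 (Set.Ioi (0 : ℝ))) = 0 := by
  set f : ℝ → ℝ := fun r => r * |u r| * |u' r| with hf
  -- key claim: for every c > 0, frequently f r < c
  have key : ∀ c : ℝ, 0 < c → ∃ᶠ r in nhdsWithin 0 (Set.Ioi (0:ℝ)), f r < c := by
    intro c hc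
    by_contra hfreq
    rw [Filter.not_frequently] at hfreq
    simp only [not_lt] at hfreq
    -- eventually c ≤ f r; extract ε
    rw [Filter.eventually_iff, mem_nhdsGT_iff_exists_Ioc_subset] at hfreq
    obtain ⟨ε₀, hε₀mem, hsub⟩ := hfreq
    have hε₀pos : 0 < ε₀ := hε₀mem
    set ε := min ε₀ r₀ with hε
    have hεpos : 0 < ε := lt_min hε₀pos hr₀
    have hbound : ∀ r ∈ Set.Ioc (0:ℝ) ε, c / r ≤ (u r)^2 / r + (u' r)^2 * r := by
      intro r hr
      have hr0 : 0 < r := hr.1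
      have hcf : c ≤ f r := hsub ⟨hr.1, hr.2.trans (min_le_left _ _)⟩
      have amgm : 2 * |u r| * (|u' r| * r) ≤ |u r|^2 + (|u' r| * r)^2 :=
        two_mul_le_add_sq _ _
      have h1 : 2 * (r * |u r| * |u' r|) ≤ (u r)^2 + (u' r)^2 * r^2 := by
        have : (|u r|)^2 = (u r)^2 := sq_abs _
        have h2 : (|u' r| * r)^2 = (u' r)^2 * r^2 := by
          rw [mul_pow, sq_abs]
        nlinarith [amgm]
      have hcf2 : c ≤ r * |u r| * |u' r| := hcf
      have hcr : 2 * c ≤ (u r)^2 + (u' r)^2 * r^2 := by nlinarith [hcf2, h1]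
      rw [div_add' _ _ _ (ne_of_gt hr0), div_le_div_iff₀ hr0 hr0]
      nlinarith [hcr, hr0]
    -- c / r is integrable on Ioc 0 ε by comparison
    have hint : IntegrableOn (fun r => (u r)^2 / r + (u' r)^2 * r) (Set.Ioc (0:ℝ) ε) :=
      (hint2.mono_set (Set.Ioc_subset_Ioc_right (min_le_right _ _))).add
        (hint1.mono_set (Set.Ioc_subset_Ioc_right (min_le_right _ _)))
    have hci : IntegrableOn (fun r => c / r) (Set.Ioc (0:ℝ) ε) := by
      refine Integrable.mono hint ?_ ?_
      · exact ((measurable_const.div measurable_id).aestronglyMeasurable).restrict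
      · rw [MeasureTheory.ae_restrict_iff' measurableSet_Ioc]
        filter_upwards with r
        intro hr
        have hr0 : 0 < r := hr.1
        have h1 : 0 ≤ c / r := div_nonneg hc.le hr0.le
        have h2 : 0 ≤ (u r)^2 / r + (u' r)^2 * r := by
          have := sq_nonneg (u r); have := sq_nonneg (u' r)
          positivity
        rw [Real.norm_eq_abs, Real.norm_eq_abs, abs_of_nonneg h1, abs_of_nonneg h2]
        exact hbound r hr
    -- but r⁻¹ is not integrable on Ioc 0 ε
    have hnot : ¬ IntegrableOn (fun r : ℝ => r ^ (-1 : ℝ)) (Set.Ioo (0:ℝ) ε) := by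
      rw [intervalIntegral.integrableOn_Ioo_rpow_iff hεpos]
      norm_num
    apply hnot
    have : IntegrableOn (fun r => c / r) (Set.Ioo (0:ℝ) ε) :=
      hci.mono_set Set.Ioo_subset_Ioc_self
    have hc' : IntegrableOn (fun r : ℝ => c⁻¹ * (c / r)) (Set.Ioo (0:ℝ) ε) :=
      this.const_mul _
    refine hc'.congr_fun ?_ measurableSet_Ioo
    intro r hr
    simp only [Real.rpow_neg_one]
    field_simp
  -- f is nonnegative
  have hnonneg : ∀ᶠ r in nhdsWithin 0 (Set.Ioi (0:ℝ)), 0 ≤ f r := by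
    filter_upwards [self_mem_nhdsWithin] with r hr
    have : (0:ℝ) < r := hr
    positivity
  have hbdd : Filter.IsBoundedUnder (· ≥ ·) (nhdsWithin 0 (Set.Ioi (0:ℝ))) f :=
    ⟨0, by simpa using hnonneg⟩
  have hcobdd : Filter.IsCoboundedUnder (· ≥ ·) (nhdsWithin 0 (Set.Ioi (0:ℝ))) f := by
    apply Filter.IsCoboundedUnder.of_frequently_le (a := 1)
    exact (key 1 one_pos).mono fun r h => h.le
  refine le_antisymm ?_ (Filter.le_liminf_of_le hcobdd hnonneg)
  refine le_of_forall_pos_le_add fun c hc => ?_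
  rw [zero_add]
  exact Filter.liminf_le_of_frequently_le ((key c hc).mono fun r h => h.le) hbdd
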